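/- Let n ≥ 1 be an integer, let ω ⊂ ℝⁿ be a bounded open set with Lipschitz boundary, and let −∞ < a < b < ∞. Then the open cylinder Ω := (a,b) × ω ⊂ ℝ^{n+1} has Lipschitz boundary. -/

import Mathlib

open MeasureTheory Set
open scoped ENNReal NNReal Pointwise

noncomputable section

/-- `Euc k` is the Euclidean space `ℝᵏ`. -/
abbrev Euc (k : ℕ) := EuclideanSpace ℝ (Fin k)

/-- An open set `U ⊆ ℝ^m` has Lipschitz boundary: near every boundary point, after an
affine isometry, `U` is the subgraph of a Lipschitz function of the first `m-1` coordinates. -/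
def HasLipschitzBoundary {m : ℕ} (U : Set (Euc m)) : Prop :=
  ∀ p ∈ frontier U,
    ∃ (hm : 0 < m) (r : ℝ) (Φ : Euc m ≃ᵃⁱ[ℝ] Euc m)
      (h : Euc (m - 1) → ℝ) (K : ℝ≥0),
      0 < r ∧ Φ 0 = p ∧ LipschitzWith K h ∧ h 0 = 0 ∧
      U ∩ Metric.ball p r =
        (Φ '' {y : Euc m | y ⟨m - 1, Nat.sub_lt hm Nat.one_pos⟩ <
            h (WithLp.toLp 2 (fun i : Fin (m - 1) => y ⟨i.1, lt_of_lt_of_le i.2 (Nat.sub_le m 1)⟩))}) ∩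
          Metric.ball p r

/-- The last `n` coordinates `x′` of a point `x = (x₁, x′) ∈ ℝ^{n+1}`. -/
def tailE {n : ℕ} (x : Euc (n + 1)) : Euc n := WithLp.toLp 2 (fun i => x i.succ)

/-- The infinite sharp cone `Ω_ε = {(x₁,x′) : x₁ > 0, x′ ∈ ε x₁ ω}`. -/
def cone (n : ℕ) (ω : Set (Euc n)) (ε : ℝ) : Set (Euc (n + 1)) :=
  {x | 0 < x 0 ∧ tailE x ∈ (ε * x 0) • ω}

/-- The geometric constant `N_ω = σ_{n-1}(∂ω) / |ω|`. -/
def Nomega (n : ℕ) (ω : Set (Euc n)) : ℝ :=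
  (μH[(n : ℝ) - 1] (frontier ω)).toReal / (volume ω).toReal

/-- The `j`-th min-max value `Λ_j(q, D)`: infimum over `j`-dimensional subspaces `S ⊆ D`
(of functions, identified with their restrictions to `U`) of the supremum of the Rayleigh
quotients `q(u) / ‖u‖²_{L²(U,μ)}` over nonzero `u ∈ S`. -/
def lambdaJ {X : Type*} [MeasurableSpace X] (μ : Measure X) (U : Set X)
    (q : (X → ℝ) → ℝ) (D : Set (X → ℝ)) (j : ℕ) : ℝ :=
  sInf {v : ℝ | ∃ S : Submodule ℝ (X → ℝ), (S : Set (X → ℝ)) ⊆ D ∧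
    Module.finrank ℝ S = j ∧
    (∀ u ∈ S, (∀ x ∈ U, u x = 0) → u = 0) ∧
    v = sSup {w : ℝ | ∃ u ∈ S, u ≠ (0 : X → ℝ) ∧
      w = q u / ∫ x in U, (u x) ^ 2 ∂μ}}

/-- The class of smooth compactly supported functions on `ℝ^{n+1}` vanishing for
`x₁` outside some compact interval `[b,c] ⊆ I`. -/
def Ddom (n : ℕ) (I : Set ℝ) : Set (Euc (n + 1) → ℝ) :=
  {u | ContDiff ℝ (⊤ : ℕ∞) u ∧ HasCompactSupport u ∧
    ∃ b c : ℝ, b ≤ c ∧ Icc b c ⊆ I ∧ ∀ x : Euc (n + 1), x 0 ∉ Icc b c → u x = 0}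

/-- The Robin form `q_ε^α(u) = ∫_{Ω_ε} |∇u|² dx − α ∫_{∂Ω_ε} u² dσ_n`. -/
def qform (n : ℕ) (ω : Set (Euc n)) (α ε : ℝ) (u : Euc (n + 1) → ℝ) : ℝ :=
  (∫ x in cone n ω ε, ‖fderiv ℝ u x‖ ^ 2) -
    α * ∫ x in frontier (cone n ω ε), (u x) ^ 2 ∂μH[(n : ℝ)]

/-- The truncated Robin form `t_ε(u) = ∫_{V_ε} |∇u|² dx − ∫_{∂₀V_ε} u² dσ_n`. -/
def tform (n : ℕ) (ω : Set (Euc n)) (a ε : ℝ) (u : Euc (n + 1) → ℝ) : ℝ :=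
  (∫ x in cone n ω ε ∩ {x | x 0 < a}, ‖fderiv ℝ u x‖ ^ 2) -
    ∫ x in frontier (cone n ω ε) ∩ {x | x 0 < a}, (u x) ^ 2 ∂μH[(n : ℝ)]

/-- The map `X(s,t) = (s, ε s t)`. -/
def Xmap (n : ℕ) (ε s : ℝ) (t : Euc n) : Euc (n + 1) :=
  WithLp.toLp 2 (fun j => Fin.cases s (fun i => ε * s * t i) j)

/-- Smooth real functions with compact support contained in `I`. -/
def Cc (I : Set ℝ) : Set (ℝ → ℝ) :=
  {f | ContDiff ℝ (⊤ : ℕ∞) f ∧ HasCompactSupport f ∧ tsupport f ⊆ I}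

/-- The 1D form `∫_I [f′(s)² + ((n²−2n)/(4s²) − N/(λ s)) f(s)²] ds`. -/
def aform (n : ℕ) (N lam : ℝ) (I : Set ℝ) (f : ℝ → ℝ) : ℝ :=
  ∫ s in I,
    ((deriv f s) ^ 2 + (((n : ℝ) ^ 2 - 2 * n) / (4 * s ^ 2) - N / (lam * s)) * (f s) ^ 2)

/-- `R = sup_{t ∈ ω} |t|`. -/
def Rsup (n : ℕ) (ω : Set (Euc n)) : ℝ := sSup ((fun t => ‖t‖) '' ω)

section Helpers


@[simp] lemma Euc.add_apply {m : ℕ} (u v : Euc m) (i : Fin m) : (u + v) i = u i + v i := rfl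
@[simp] lemma Euc.smul_apply' {m : ℕ} (c : ℝ) (u : Euc m) (i : Fin m) : (c • u) i = c * u i := rfl
lemma tailE_add {m : ℕ} (x y : Euc (m+1)) : tailE (x + y) = tailE x + tailE y := by ext i; rfl
lemma tailE_smul {m : ℕ} (c : ℝ) (x : Euc (m+1)) : tailE (c • x) = c • tailE x := by ext i; rfl
lemma tailE_zero {m : ℕ} : tailE (0 : Euc (m+1)) = 0 := by ext i; rfl

lemma Euc.norm_eq' {m : ℕ} (x : Euc m) : ‖x‖ = Real.sqrt (∑ i, (x i)^2) := by
  rw [EuclideanSpace.norm_eq]; congr 1; exact Finset.sum_congr rfl fun j _ => by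
    rw [Real.norm_eq_abs, sq_abs]

lemma sum_sq_nonneg' {m : ℕ} (x : Euc m) : 0 ≤ ∑ i, (x i)^2 :=
  Finset.sum_nonneg fun _ _ => sq_nonneg _

lemma norm_eq_iff_sum_sq {m : ℕ} (x y : Euc m) : ‖x‖ = ‖y‖ ↔ ∑ i, (x i)^2 = ∑ i, (y i)^2 := by
  rw [Euc.norm_eq', Euc.norm_eq']
  constructor
  · intro hh
    have h2 := congrArg (fun t => t^2) hh
    simpa [Real.sq_sqrt (sum_sq_nonneg' x), Real.sq_sqrt (sum_sq_nonneg' y)] using h2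
  · intro hh; rw [hh]

lemma abs_coord_le_norm {m : ℕ} (x : Euc m) (i : Fin m) : |x i| ≤ ‖x‖ := by
  rw [Euc.norm_eq', ← Real.sqrt_sq_eq_abs]
  exact Real.sqrt_le_sqrt (Finset.single_le_sum (fun j _ => sq_nonneg (x j)) (Finset.mem_univ i))

lemma norm_tailE_le {m : ℕ} (x : Euc (m+1)) : ‖tailE x‖ ≤ ‖x‖ := by
  rw [Euc.norm_eq', Euc.norm_eq']
  apply Real.sqrt_le_sqrt
  rw [Fin.sum_univ_succ]
  exact le_add_of_nonneg_left (sq_nonneg (x 0))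

lemma dist_tailE_le {m : ℕ} (x y : Euc (m+1)) : dist (tailE x) (tailE y) ≤ dist x y := by
  rw [dist_eq_norm, dist_eq_norm]
  rw [show tailE x - tailE y = tailE (x - y) by ext i; rfl]
  exact norm_tailE_le (x - y)

lemma abs_coord_sub_le {m : ℕ} (x y : Euc m) (i : Fin m) : |x i - y i| ≤ dist x y := by
  rw [dist_eq_norm]; exact abs_coord_le_norm (x - y) i

def mkLI {m : ℕ} (f g : Euc m → Euc m)
    (hadd : ∀ x y, f (x + y) = f x + f y)
    (hsmul : ∀ (c : ℝ) (x), f (c • x) = c • f x)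
    (hgf : ∀ x, g (f x) = x) (hfg : ∀ x, f (g x) = x)
    (hnorm : ∀ x, ‖f x‖ = ‖x‖) : Euc m ≃ₗᵢ[ℝ] Euc m where
  toFun := f
  invFun := g
  map_add' := hadd
  map_smul' := hsmul
  left_inv := hgf
  right_inv := hfg
  norm_map' := hnorm

@[simp] lemma mkLI_apply {m : ℕ} (f g) (h1 h2 h3 h4 h5) (x : Euc m) :
    mkLI f g h1 h2 h3 h4 h5 x = f x := rfl

def liftLI {m : ℕ} (δ : ℝ) (hδ : δ * δ = 1) (L : Euc m ≃ₗᵢ[ℝ] Euc m) :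
    Euc (m+1) ≃ₗᵢ[ℝ] Euc (m+1) :=
  mkLI (fun y => WithLp.toLp 2 (Fin.cons (δ * y 0) (L (tailE y)) : ∀ _ : Fin (m+1), ℝ))
    (fun x => WithLp.toLp 2 (Fin.cons (δ * x 0) (L.symm (tailE x)) : ∀ _ : Fin (m+1), ℝ))
    (by
      intro x y; ext i
      refine Fin.cases ?_ (fun j => ?_) i
      · simp only [Euc.add_apply, WithLp.ofLp_toLp, Fin.cons_zero]; ring
      · simp only [Euc.add_apply, WithLp.ofLp_toLp, Fin.cons_succ, tailE_add, map_add])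
    (by
      intro c x; ext i
      refine Fin.cases ?_ (fun j => ?_) i
      · simp only [Euc.smul_apply', WithLp.ofLp_toLp, Fin.cons_zero]; ring
      · simp only [Euc.smul_apply', WithLp.ofLp_toLp, Fin.cons_succ, tailE_smul, _root_.map_smul, Euc.smul_apply'])
    (by
      intro x; ext i
      refine Fin.cases ?_ (fun j => ?_) i
      · simp only [WithLp.ofLp_toLp, Fin.cons_zero, ← mul_assoc, hδ, one_mul]
      · have ht : tailE (WithLp.toLp 2 (Fin.cons (δ * x 0) (L (tailE x)) : ∀ _ : Fin (m+1), ℝ)) = L (tailE x) := by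
          ext j; simp only [tailE, WithLp.ofLp_toLp, Fin.cons_succ]
        simp only [WithLp.ofLp_toLp, Fin.cons_succ, ht, L.symm_apply_apply]
        rfl)
    (by
      intro x; ext i
      refine Fin.cases ?_ (fun j => ?_) i
      · simp only [WithLp.ofLp_toLp, Fin.cons_zero, ← mul_assoc, hδ, one_mul]
      · have ht : tailE (WithLp.toLp 2 (Fin.cons (δ * x 0) (L.symm (tailE x)) : ∀ _ : Fin (m+1), ℝ)) = L.symm (tailE x) := by
          ext j; simp only [tailE, WithLp.ofLp_toLp, Fin.cons_succ]
        simp only [WithLp.ofLp_toLp, Fin.cons_succ, ht, L.apply_symm_apply]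
        rfl)
    (by
      intro x
      rw [norm_eq_iff_sum_sq, Fin.sum_univ_succ, Fin.sum_univ_succ]
      have h1 : ∑ j, ((L (tailE x)) j)^2 = ∑ j, ((tailE x) j)^2 :=
        (norm_eq_iff_sum_sq _ _).mp (L.norm_map _)
      simp only [WithLp.ofLp_toLp, Fin.cons_zero, Fin.cons_succ]
      rw [h1, mul_pow, sq, hδ, one_mul]
      rfl)

@[simp] lemma liftLI_apply_zero {m : ℕ} (δ : ℝ) (hδ) (L : Euc m ≃ₗᵢ[ℝ] Euc m) (y : Euc (m+1)) :
    liftLI δ hδ L y 0 = δ * y 0 := by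
  simp [liftLI]

@[simp] lemma tailE_liftLI {m : ℕ} (δ : ℝ) (hδ) (L : Euc m ≃ₗᵢ[ℝ] Euc m) (y : Euc (m+1)) :
    tailE (liftLI δ hδ L y) = L (tailE y) := by
  ext j
  show (liftLI δ hδ L y) j.succ = _
  simp [liftLI]


lemma sum_split {k : ℕ} (f : Fin (k+2) → ℝ) :
    ∑ i, f i = f 0 + (∑ j : Fin k, f j.castSucc.succ) + f (Fin.last (k+1)) := by
  rw [Fin.sum_univ_succ, Fin.sum_univ_castSucc, Fin.succ_last]; ring

lemma zero_ne_last (k : ℕ) : (0 : Fin (k+2)) ≠ Fin.last (k+1) := by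
  simp [Fin.ext_iff]

lemma mid_ne_zero {k : ℕ} (j : Fin k) : (j.castSucc.succ : Fin (k+2)) ≠ 0 := Fin.succ_ne_zero _

lemma mid_ne_last {k : ℕ} (j : Fin k) : (j.castSucc.succ : Fin (k+2)) ≠ Fin.last (k+1) := by
  intro hh
  have := congrArg Fin.val hh
  simp [Fin.val_last] at this
  omega

def rotFun {k : ℕ} (y : Euc (k+2)) : Euc (k+2) := WithLp.toLp 2 fun i =>
  if i = 0 then (y 0 + y (Fin.last (k+1))) / Real.sqrt 2
  else if i = Fin.last (k+1) then (y (Fin.last (k+1)) - y 0) / Real.sqrt 2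
  else y i

def rotInv {k : ℕ} (x : Euc (k+2)) : Euc (k+2) := WithLp.toLp 2 fun i =>
  if i = 0 then (x 0 - x (Fin.last (k+1))) / Real.sqrt 2
  else if i = Fin.last (k+1) then (x 0 + x (Fin.last (k+1))) / Real.sqrt 2
  else x i

lemma rotFun_apply {k : ℕ} (y : Euc (k+2)) (i : Fin (k+2)) : rotFun y i =
    if i = 0 then (y 0 + y (Fin.last (k+1))) / Real.sqrt 2
    else if i = Fin.last (k+1) then (y (Fin.last (k+1)) - y 0) / Real.sqrt 2
    else y i := rfl

lemma rotInv_apply {k : ℕ} (x : Euc (k+2)) (i : Fin (k+2)) : rotInv x i =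
    if i = 0 then (x 0 - x (Fin.last (k+1))) / Real.sqrt 2
    else if i = Fin.last (k+1) then (x 0 + x (Fin.last (k+1))) / Real.sqrt 2
    else x i := rfl

lemma rotFun_zero {k : ℕ} (y : Euc (k+2)) :
    rotFun y 0 = (y 0 + y (Fin.last (k+1))) / Real.sqrt 2 := by rw [rotFun_apply, if_pos rfl]

lemma rotFun_last {k : ℕ} (y : Euc (k+2)) :
    rotFun y (Fin.last (k+1)) = (y (Fin.last (k+1)) - y 0) / Real.sqrt 2 := by
  rw [rotFun_apply, if_neg (zero_ne_last k).symm, if_pos rfl]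

lemma rotFun_ne {k : ℕ} (y : Euc (k+2)) (i : Fin (k+2)) (h1 : i ≠ 0) (h2 : i ≠ Fin.last (k+1)) :
    rotFun y i = y i := by
  rw [rotFun_apply, if_neg h1, if_neg h2]


lemma sqrt2_pos : (0:ℝ) < Real.sqrt 2 := Real.sqrt_pos.mpr (by norm_num)
lemma sqrt2_ne : (Real.sqrt 2 : ℝ) ≠ 0 := ne_of_gt sqrt2_pos
lemma sqrt2_mul_self : Real.sqrt 2 * Real.sqrt 2 = 2 := Real.mul_self_sqrt (by norm_num)
lemma sqrt2_sq : (Real.sqrt 2)^2 = 2 := Real.sq_sqrt (by norm_num)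
lemma one_le_sqrt2 : (1:ℝ) ≤ Real.sqrt 2 := by
  nlinarith [sqrt2_mul_self, sqrt2_pos]

def rotLI (k : ℕ) : Euc (k+2) ≃ₗᵢ[ℝ] Euc (k+2) :=
  mkLI rotFun rotInv
    (by
      intro x y; ext i
      simp only [rotFun_apply, Euc.add_apply]
      split_ifs <;> ring)
    (by
      intro c x; ext i
      simp only [rotFun_apply, Euc.smul_apply']
      split_ifs <;> ring)
    (by
      intro x; ext i
      by_cases h1 : i = 0
      · subst h1
        rw [rotInv_apply, rotFun_zero, rotFun_last, if_pos rfl]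
        field_simp
        rw [sqrt2_sq]
        try ring
      · by_cases h2 : i = Fin.last (k+1)
        · subst h2
          rw [rotInv_apply, rotFun_zero, rotFun_last, if_neg h1, if_pos rfl]
          field_simp
          rw [sqrt2_sq]
          try ring
        try ring
        · rw [rotInv_apply, if_neg h1, if_neg h2, rotFun_ne _ _ h1 h2]
    )
    (by
      intro x; ext i
      by_cases h1 : i = 0
      · subst h1
        rw [rotFun_zero, rotInv_apply, rotInv_apply]
        rw [if_pos rfl, if_neg (zero_ne_last k).symm, if_pos rfl]
        field_simp
        rw [sqrt2_sq]
        try ring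
      · by_cases h2 : i = Fin.last (k+1)
        · subst h2
          rw [rotFun_last, rotInv_apply, rotInv_apply]
          rw [if_pos rfl, if_neg (zero_ne_last k).symm, if_pos rfl]
          field_simp
          rw [sqrt2_sq]
          try ring
        try ring
        · rw [rotFun_ne _ _ h1 h2, rotInv_apply, if_neg h1, if_neg h2]
    )
    (by
      intro x
      rw [norm_eq_iff_sum_sq, sum_split (fun i => (rotFun x i)^2), sum_split (fun i => (x i)^2)]
      have hmid : ∀ j : Fin k, (rotFun x j.castSucc.succ)^2 = (x j.castSucc.succ)^2 := fun j => by
        rw [rotFun_ne _ _ (mid_ne_zero j) (mid_ne_last j)]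
      rw [Finset.sum_congr rfl fun j _ => hmid j, rotFun_zero, rotFun_last,
        div_pow, div_pow, sqrt2_sq]
      ring)

@[simp] lemma rotLI_apply_zero {k : ℕ} (y : Euc (k+2)) :
    rotLI k y 0 = (y 0 + y (Fin.last (k+1))) / Real.sqrt 2 := by
  show rotFun y 0 = _; exact rotFun_zero y

@[simp] lemma rotLI_apply_last {k : ℕ} (y : Euc (k+2)) :
    rotLI k y (Fin.last (k+1)) = (y (Fin.last (k+1)) - y 0) / Real.sqrt 2 := by
  show rotFun y (Fin.last (k+1)) = _; exact rotFun_last y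

lemma rotLI_apply_ne {k : ℕ} (y : Euc (k+2)) (i : Fin (k+2)) (h1 : i ≠ 0)
    (h2 : i ≠ Fin.last (k+1)) : rotLI k y i = y i := by
  show rotFun y i = _; exact rotFun_ne y i h1 h2

lemma norm_rotLI {k : ℕ} (y : Euc (k+2)) : ‖rotLI k y‖ = ‖y‖ := (rotLI k).norm_map y


def affOf {m : ℕ} (L : Euc m ≃ₗᵢ[ℝ] Euc m) (p : Euc m) : Euc m ≃ᵃⁱ[ℝ] Euc m :=
  L.toAffineIsometryEquiv.trans (AffineIsometryEquiv.constVAdd ℝ (Euc m) p)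

lemma affOf_apply {m : ℕ} (L : Euc m ≃ₗᵢ[ℝ] Euc m) (p : Euc m) (y : Euc m) :
    affOf L p y = p + L y := by
  have h1 := AffineIsometryEquiv.coe_trans L.toAffineIsometryEquiv
    (AffineIsometryEquiv.constVAdd ℝ (Euc m) p)
  have : affOf L p y = (AffineIsometryEquiv.constVAdd ℝ (Euc m) p) (L.toAffineIsometryEquiv y) :=
    congrFun h1 y
  rw [this, AffineIsometryEquiv.coe_constVAdd]
  show p +ᵥ (L.toAffineIsometryEquiv y) = _
  rw [LinearIsometryEquiv.coe_toAffineIsometryEquiv]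
  rfl

lemma affOf_zero {m : ℕ} (L : Euc m ≃ₗᵢ[ℝ] Euc m) (p : Euc m) : affOf L p 0 = p := by
  rw [affOf_apply]; simp

lemma setEq {m : ℕ} (L : Euc m ≃ₗᵢ[ℝ] Euc m) (p : Euc m) (S U B : Set (Euc m))
    (hiff : ∀ y, p + L y ∈ B → (p + L y ∈ U ↔ y ∈ S)) :
    U ∩ B = ((fun y => p + L y) '' S) ∩ B := by
  ext x
  simp only [Set.mem_inter_iff, Set.mem_image]
  constructor
  · rintro ⟨hU, hB⟩
    have hx : p + L (L.symm (x - p)) = x := by simp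
    exact ⟨⟨L.symm (x - p), (hiff _ (by rw [hx]; exact hB)).mp (by rw [hx]; exact hU), hx⟩, hB⟩
  · rintro ⟨⟨y, hyS, hyx⟩, hB⟩
    refine ⟨?_, hB⟩
    rw [← hyx]
    exact (hiff y (by rw [hyx]; exact hB)).mpr hyS

lemma ball_norm {m : ℕ} (L : Euc m ≃ₗᵢ[ℝ] Euc m) (p : Euc m) (r : ℝ) (y : Euc m)
    (hy : p + L y ∈ Metric.ball p r) : ‖y‖ < r := by
  simpa [Metric.mem_ball, dist_eq_norm, add_sub_cancel_left, L.norm_map] using hy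

lemma interEq_mem {α : Type*} [PseudoMetricSpace α] {A B : Set α} {c : α} {ρ : ℝ}
    (h : A ∩ Metric.ball c ρ = B ∩ Metric.ball c ρ) {t : α} (ht : t ∈ Metric.ball c ρ) :
    t ∈ A ↔ t ∈ B := by
  have := Set.ext_iff.mp h t
  simpa [Set.mem_inter_iff, ht] using this

end Helpers

set_option maxHeartbeats 2000000 in
/-- the cylinder `(a,b) × ω` has Lipschitz boundary. -/
theorem statement19 (n : ℕ) (hn : 1 ≤ n) (ω : Set (Euc n)) (hω_open : IsOpen ω)
    (hω_bdd : Bornology.IsBounded ω) (hω_lip : HasLipschitzBoundary ω)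
    (a b : ℝ) (hab : a < b) :
    HasLipschitzBoundary {x : Euc (n + 1) | x 0 ∈ Ioo a b ∧ tailE x ∈ ω} := by
  obtain ⟨k, rfl⟩ : ∃ k, n = k + 1 := ⟨n - 1, (Nat.succ_pred_eq_of_pos hn).symm⟩
  intro p hp
  show ∃ (_ : 0 < k+1+1) (r : ℝ) (Φ : Euc (k+1+1) ≃ᵃⁱ[ℝ] Euc (k+1+1))
      (h : Euc (k+1) → ℝ) (K : ℝ≥0),
      0 < r ∧ Φ 0 = p ∧ LipschitzWith K h ∧ h 0 = 0 ∧
      {x : Euc (k+1+1) | x 0 ∈ Ioo a b ∧ tailE x ∈ ω} ∩ Metric.ball p r =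
        (Φ '' {y : Euc (k+1+1) |
          y (Fin.last (k+1)) < h (WithLp.toLp 2 (fun i : Fin (k+1) => y i.castSucc))}) ∩ Metric.ball p r
  -- continuity of the two coordinate projections
  have cont0 : Continuous fun x : Euc (k+1+1) => x 0 := by
    have hl : LipschitzWith 1 (fun x : Euc (k+1+1) => x 0) := by
      rw [lipschitzWith_iff_dist_le_mul]
      intro x y
      simpa [Real.dist_eq, NNReal.coe_one, one_mul] using abs_coord_sub_le x y 0
    exact hl.continuous
  have contT : Continuous (tailE (n := k+1)) := by
    have hl : LipschitzWith 1 (tailE (n := k+1)) := by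
      rw [lipschitzWith_iff_dist_le_mul]
      intro x y
      simpa [NNReal.coe_one, one_mul] using dist_tailE_le x y
    exact hl.continuous
  have hUeq : {x : Euc (k+1+1) | x 0 ∈ Ioo a b ∧ tailE x ∈ ω} =
      ((fun x : Euc (k+1+1) => x 0) ⁻¹' (Ioo a b)) ∩ (tailE ⁻¹' ω) := rfl
  have hp' := frontier_inter_subset ((fun x : Euc (k+1+1) => x 0) ⁻¹' (Ioo a b)) (tailE ⁻¹' ω)
      (by rw [← hUeq]; exact hp)
  have hIcc : a ≤ p 0 ∧ p 0 ≤ b := by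
    have hcl : p ∈ closure ((fun x : Euc (k+1+1) => x 0) ⁻¹' (Ioo a b)) := by
      rcases hp' with ⟨h1, -⟩ | ⟨h1, -⟩
      exacts [frontier_subset_closure h1, h1]
    have := cont0.closure_preimage_subset _ hcl
    rw [closure_Ioo hab.ne] at this
    exact this
  have hclω : tailE p ∈ closure ω := by
    have hcl : p ∈ closure (tailE ⁻¹' ω) := by
      rcases hp' with ⟨-, h2⟩ | ⟨-, h2⟩
      exacts [h2, frontier_subset_closure h2]
    exact contT.closure_preimage_subset _ hcl
  have hdisj : (p 0 = a ∨ p 0 = b) ∨ tailE p ∈ frontier ω := by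
    rcases hp' with ⟨h1, -⟩ | ⟨-, h2⟩
    · left
      have := cont0.frontier_preimage_subset _ h1
      rw [frontier_Ioo hab] at this
      simpa using this
    · right
      exact contT.frontier_preimage_subset _ h2
  by_cases hfω : tailE p ∈ frontier ω
  · by_cases hpa : p 0 = a
    · -- corner at x₀ = a
      obtain ⟨hm', ρ, Φω, hωf, K, hρ, hΦω0, hKω, hω0, heqω⟩ := hω_lip (tailE p) hfω
      have hdec : ∀ t, Φω t = Φω.linearIsometryEquiv t + tailE p := by
        intro t
        have h1 := Φω.map_vadd 0 t
        simpa [vadd_eq_add, hΦω0] using h1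
      set L : Euc (k+1+1) ≃ₗᵢ[ℝ] Euc (k+1+1) :=
        (rotLI k).trans (liftLI (-1) (by norm_num) Φω.linearIsometryEquiv) with hLdef
      have hSmem : ∀ y : Euc (k+1+1),
          (y (Fin.last (k+1)) <
            (fun z : Euc (k+1) => min (-(z 0)) (z 0 + Real.sqrt 2 * hωf (tailE z)))
              (WithLp.toLp 2 (fun i : Fin (k+1) => y i.castSucc))) ↔
            (y (Fin.last (k+1)) < -(y 0) ∧
             y (Fin.last (k+1)) < y 0 + Real.sqrt 2 * hωf (WithLp.toLp 2 (fun i : Fin k => y i.castSucc.succ))) := by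
        intro y
        rw [show ((fun z : Euc (k+1) => min (-(z 0)) (z 0 + Real.sqrt 2 * hωf (tailE z)))
              (WithLp.toLp 2 (fun i : Fin (k+1) => y i.castSucc))) =
            min (-(y ((0 : Fin (k+1)).castSucc)))
              (y ((0 : Fin (k+1)).castSucc) +
                Real.sqrt 2 * hωf (WithLp.toLp 2 (fun i : Fin k => y i.castSucc.succ))) from rfl]
        rw [Fin.castSucc_zero, lt_min_iff]
      refine ⟨Nat.succ_pos _, min ρ ((b - a)/2), affOf L p,
        (fun z : Euc (k+1) => min (-(z 0)) (z 0 + Real.sqrt 2 * hωf (tailE z))),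
        1 + Real.toNNReal (Real.sqrt 2) * K, lt_min hρ (by linarith), affOf_zero _ _, ?_, ?_, ?_⟩
      · rw [lipschitzWith_iff_dist_le_mul]
        intro z z'
        have hd0 : |z 0 - z' 0| ≤ dist z z' := abs_coord_sub_le z z' 0
        have hdh : |hωf (tailE z) - hωf (tailE z')| ≤ K * dist z z' := by
          have h1 := hKω.dist_le_mul (tailE z) (tailE z')
          rw [Real.dist_eq] at h1
          exact h1.trans (mul_le_mul_of_nonneg_left (dist_tailE_le _ _) K.coe_nonneg)
        have hcoe : ((1 + Real.toNNReal (Real.sqrt 2) * K : ℝ≥0) : ℝ) = 1 + Real.sqrt 2 * K := by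
          push_cast [Real.coe_toNNReal _ (Real.sqrt_nonneg 2)]
          ring
        rw [Real.dist_eq, hcoe]
        have hmax := abs_min_sub_min_le_max (-(z 0)) (z 0 + Real.sqrt 2 * hωf (tailE z))
          (-(z' 0)) (z' 0 + Real.sqrt 2 * hωf (tailE z'))
        refine hmax.trans (max_le ?_ ?_)
        · have h2 : |(-(z 0)) - (-(z' 0))| = |z 0 - z' 0| := by rw [neg_sub_neg, abs_sub_comm]
          rw [h2]
          have hmn : 0 ≤ (Real.sqrt 2 * (K:ℝ)) * dist z z' :=
            mul_nonneg (mul_nonneg (Real.sqrt_nonneg 2) K.coe_nonneg) dist_nonneg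
          linarith
        · have h3 : (z 0 + Real.sqrt 2 * hωf (tailE z)) - (z' 0 + Real.sqrt 2 * hωf (tailE z')) =
              (z 0 - z' 0) + Real.sqrt 2 * (hωf (tailE z) - hωf (tailE z')) := by ring
          rw [h3]
          refine (abs_add_le _ _).trans ?_
          rw [abs_mul, abs_of_nonneg (Real.sqrt_nonneg 2)]
          linarith [mul_le_mul_of_nonneg_left hdh (Real.sqrt_nonneg 2), hd0]
      · show min (-((0 : Euc (k+1)) 0)) ((0 : Euc (k+1)) 0 + Real.sqrt 2 * hωf (tailE 0)) = 0
        rw [tailE_zero, hω0, show ((0 : Euc (k+1)) 0 : ℝ) = 0 from rfl]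
        norm_num
      · have hcoe2 : ⇑(affOf L p) = fun y => p + L y := funext fun y => affOf_apply _ _ _
        rw [hcoe2]
        apply setEq
        intro y hy
        have hn' := ball_norm _ p _ y hy
        have hnρ : ‖y‖ < ρ := hn'.trans_le (min_le_left _ _)
        have hnab : ‖y‖ < (b - a)/2 := hn'.trans_le (min_le_right _ _)
        have hy0 := abs_coord_le_norm y 0
        have hyL := abs_coord_le_norm y (Fin.last (k+1))
        have hx0 : (p + L y) 0 = p 0 + (-1) * ((y 0 + y (Fin.last (k+1))) / Real.sqrt 2) := by
          rw [Euc.add_apply, hLdef, LinearIsometryEquiv.trans_apply, liftLI_apply_zero,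
            rotLI_apply_zero]
        have hxt : tailE (p + L y) = Φω (tailE (rotLI k y)) := by
          rw [tailE_add, hLdef, LinearIsometryEquiv.trans_apply, tailE_liftLI, hdec]
          exact add_comm _ _
        have hball2 : tailE (p + L y) ∈ Metric.ball (tailE p) ρ := by
          rw [Metric.mem_ball, tailE_add, dist_eq_norm, add_sub_cancel_left, hLdef,
            LinearIsometryEquiv.trans_apply, tailE_liftLI, LinearIsometryEquiv.norm_map]
          exact lt_of_le_of_lt (norm_tailE_le _) (by rw [(rotLI k).norm_map]; exact hnρ)
        have e1 : tailE (rotLI k y) (Fin.last k) = (y (Fin.last (k+1)) - y 0) / Real.sqrt 2 := by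
          show rotLI k y (Fin.last k).succ = _
          rw [Fin.succ_last]
          exact rotLI_apply_last y
        have e2 : (fun i : Fin k => tailE (rotLI k y) i.castSucc) =
            (fun i : Fin k => y i.castSucc.succ) := by
          funext i
          show rotLI k y i.castSucc.succ = _
          exact rotLI_apply_ne y _ (mid_ne_zero i) (mid_ne_last i)
        have htmem : tailE (p + L y) ∈ ω ↔
            (y (Fin.last (k+1)) - y 0) / Real.sqrt 2 <
              hωf (WithLp.toLp 2 (fun i : Fin k => y i.castSucc.succ)) := by
          rw [interEq_mem heqω hball2, hxt, Function.Injective.mem_set_image Φω.injective]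
          show tailE (rotLI k y) (Fin.last k) <
              hωf (WithLp.toLp 2 (fun i : Fin k => tailE (rotLI k y) i.castSucc)) ↔ _
          rw [e1, e2]
        have habs : |(y 0 + y (Fin.last (k+1))) / Real.sqrt 2| < b - a := by
          rw [abs_div, abs_of_pos sqrt2_pos]
          calc |y 0 + y (Fin.last (k+1))| / Real.sqrt 2 ≤ |y 0 + y (Fin.last (k+1))| :=
              div_le_self (abs_nonneg _) one_le_sqrt2
            _ ≤ |y 0| + |y (Fin.last (k+1))| := abs_add_le _ _
            _ < b - a := by linarith
        have hD := abs_lt.mp habs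
        constructor
        · rintro ⟨⟨h1, h2⟩, h3⟩
          rw [hx0, hpa] at h1
          have hq : (y 0 + y (Fin.last (k+1))) / Real.sqrt 2 < 0 := by linarith
          have hq2 : y 0 + y (Fin.last (k+1)) < 0 := by
            have := (div_lt_iff₀ sqrt2_pos).mp hq
            rw [zero_mul] at this
            exact this
          have hc2 : y (Fin.last (k+1)) <
              y 0 + Real.sqrt 2 * hωf (WithLp.toLp 2 (fun i : Fin k => y i.castSucc.succ)) := by
            have h4 := (div_lt_iff₀ sqrt2_pos).mp (htmem.mp h3)
            linarith [mul_comm (hωf (WithLp.toLp 2 (fun i : Fin k => y i.castSucc.succ))) (Real.sqrt 2)]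
          exact (hSmem y).mpr ⟨by linarith, hc2⟩
        · intro hS
          obtain ⟨hc1, hc2⟩ := (hSmem y).mp hS
          have hq : (y 0 + y (Fin.last (k+1))) / Real.sqrt 2 < 0 :=
            div_neg_of_neg_of_pos (by linarith) sqrt2_pos
          refine ⟨⟨?_, ?_⟩, htmem.mpr ?_⟩
          · rw [hx0, hpa]
            linarith
          · rw [hx0, hpa]
            linarith
          · rw [div_lt_iff₀ sqrt2_pos]
            linarith [mul_comm (hωf (WithLp.toLp 2 (fun i : Fin k => y i.castSucc.succ))) (Real.sqrt 2), hc2]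

    · by_cases hpb : p 0 = b
      · -- corner at x₀ = b
        obtain ⟨hm', ρ, Φω, hωf, K, hρ, hΦω0, hKω, hω0, heqω⟩ := hω_lip (tailE p) hfω
        have hdec : ∀ t, Φω t = Φω.linearIsometryEquiv t + tailE p := by
          intro t
          have h1 := Φω.map_vadd 0 t
          simpa [vadd_eq_add, hΦω0] using h1
        set L : Euc (k+1+1) ≃ₗᵢ[ℝ] Euc (k+1+1) :=
          (rotLI k).trans (liftLI 1 (by norm_num) Φω.linearIsometryEquiv) with hLdef
        have hSmem : ∀ y : Euc (k+1+1),
            (y (Fin.last (k+1)) <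
              (fun z : Euc (k+1) => min (-(z 0)) (z 0 + Real.sqrt 2 * hωf (tailE z)))
                (WithLp.toLp 2 (fun i : Fin (k+1) => y i.castSucc))) ↔
              (y (Fin.last (k+1)) < -(y 0) ∧
               y (Fin.last (k+1)) < y 0 + Real.sqrt 2 * hωf (WithLp.toLp 2 (fun i : Fin k => y i.castSucc.succ))) := by
          intro y
          rw [show ((fun z : Euc (k+1) => min (-(z 0)) (z 0 + Real.sqrt 2 * hωf (tailE z)))
                (WithLp.toLp 2 (fun i : Fin (k+1) => y i.castSucc))) =
              min (-(y ((0 : Fin (k+1)).castSucc)))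
                (y ((0 : Fin (k+1)).castSucc) +
                  Real.sqrt 2 * hωf (WithLp.toLp 2 (fun i : Fin k => y i.castSucc.succ))) from rfl]
          rw [Fin.castSucc_zero, lt_min_iff]
        refine ⟨Nat.succ_pos _, min ρ ((b - a)/2), affOf L p,
          (fun z : Euc (k+1) => min (-(z 0)) (z 0 + Real.sqrt 2 * hωf (tailE z))),
          1 + Real.toNNReal (Real.sqrt 2) * K, lt_min hρ (by linarith), affOf_zero _ _, ?_, ?_, ?_⟩
        · rw [lipschitzWith_iff_dist_le_mul]
          intro z z'
          have hd0 : |z 0 - z' 0| ≤ dist z z' := abs_coord_sub_le z z' 0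
          have hdh : |hωf (tailE z) - hωf (tailE z')| ≤ K * dist z z' := by
            have h1 := hKω.dist_le_mul (tailE z) (tailE z')
            rw [Real.dist_eq] at h1
            exact h1.trans (mul_le_mul_of_nonneg_left (dist_tailE_le _ _) K.coe_nonneg)
          have hcoe : ((1 + Real.toNNReal (Real.sqrt 2) * K : ℝ≥0) : ℝ) = 1 + Real.sqrt 2 * K := by
            push_cast [Real.coe_toNNReal _ (Real.sqrt_nonneg 2)]
            ring
          rw [Real.dist_eq, hcoe]
          have hmax := abs_min_sub_min_le_max (-(z 0)) (z 0 + Real.sqrt 2 * hωf (tailE z))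
            (-(z' 0)) (z' 0 + Real.sqrt 2 * hωf (tailE z'))
          refine hmax.trans (max_le ?_ ?_)
          · have h2 : |(-(z 0)) - (-(z' 0))| = |z 0 - z' 0| := by rw [neg_sub_neg, abs_sub_comm]
            rw [h2]
            have hmn : 0 ≤ (Real.sqrt 2 * (K:ℝ)) * dist z z' :=
              mul_nonneg (mul_nonneg (Real.sqrt_nonneg 2) K.coe_nonneg) dist_nonneg
            linarith
          · have h3 : (z 0 + Real.sqrt 2 * hωf (tailE z)) - (z' 0 + Real.sqrt 2 * hωf (tailE z')) =
                (z 0 - z' 0) + Real.sqrt 2 * (hωf (tailE z) - hωf (tailE z')) := by ring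
            rw [h3]
            refine (abs_add_le _ _).trans ?_
            rw [abs_mul, abs_of_nonneg (Real.sqrt_nonneg 2)]
            linarith [mul_le_mul_of_nonneg_left hdh (Real.sqrt_nonneg 2), hd0]
        · show min (-((0 : Euc (k+1)) 0)) ((0 : Euc (k+1)) 0 + Real.sqrt 2 * hωf (tailE 0)) = 0
          rw [tailE_zero, hω0, show ((0 : Euc (k+1)) 0 : ℝ) = 0 from rfl]
          norm_num
        · have hcoe2 : ⇑(affOf L p) = fun y => p + L y := funext fun y => affOf_apply _ _ _
          rw [hcoe2]
          apply setEq
          intro y hy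
          have hn' := ball_norm _ p _ y hy
          have hnρ : ‖y‖ < ρ := hn'.trans_le (min_le_left _ _)
          have hnab : ‖y‖ < (b - a)/2 := hn'.trans_le (min_le_right _ _)
          have hy0 := abs_coord_le_norm y 0
          have hyL := abs_coord_le_norm y (Fin.last (k+1))
          have hx0 : (p + L y) 0 = p 0 + 1 * ((y 0 + y (Fin.last (k+1))) / Real.sqrt 2) := by
            rw [Euc.add_apply, hLdef, LinearIsometryEquiv.trans_apply, liftLI_apply_zero,
              rotLI_apply_zero]
          have hxt : tailE (p + L y) = Φω (tailE (rotLI k y)) := by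
            rw [tailE_add, hLdef, LinearIsometryEquiv.trans_apply, tailE_liftLI, hdec]
            exact add_comm _ _
          have hball2 : tailE (p + L y) ∈ Metric.ball (tailE p) ρ := by
            rw [Metric.mem_ball, tailE_add, dist_eq_norm, add_sub_cancel_left, hLdef,
              LinearIsometryEquiv.trans_apply, tailE_liftLI, LinearIsometryEquiv.norm_map]
            exact lt_of_le_of_lt (norm_tailE_le _) (by rw [(rotLI k).norm_map]; exact hnρ)
          have e1 : tailE (rotLI k y) (Fin.last k) = (y (Fin.last (k+1)) - y 0) / Real.sqrt 2 := by
            show rotLI k y (Fin.last k).succ = _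
            rw [Fin.succ_last]
            exact rotLI_apply_last y
          have e2 : (fun i : Fin k => tailE (rotLI k y) i.castSucc) =
              (fun i : Fin k => y i.castSucc.succ) := by
            funext i
            show rotLI k y i.castSucc.succ = _
            exact rotLI_apply_ne y _ (mid_ne_zero i) (mid_ne_last i)
          have htmem : tailE (p + L y) ∈ ω ↔
              (y (Fin.last (k+1)) - y 0) / Real.sqrt 2 <
                hωf (WithLp.toLp 2 (fun i : Fin k => y i.castSucc.succ)) := by
            rw [interEq_mem heqω hball2, hxt, Function.Injective.mem_set_image Φω.injective]
            show tailE (rotLI k y) (Fin.last k) <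
                hωf (WithLp.toLp 2 (fun i : Fin k => tailE (rotLI k y) i.castSucc)) ↔ _
            rw [e1, e2]
          have habs : |(y 0 + y (Fin.last (k+1))) / Real.sqrt 2| < b - a := by
            rw [abs_div, abs_of_pos sqrt2_pos]
            calc |y 0 + y (Fin.last (k+1))| / Real.sqrt 2 ≤ |y 0 + y (Fin.last (k+1))| :=
                div_le_self (abs_nonneg _) one_le_sqrt2
              _ ≤ |y 0| + |y (Fin.last (k+1))| := abs_add_le _ _
              _ < b - a := by linarith
          have hD := abs_lt.mp habs
          constructor
          · rintro ⟨⟨h1, h2⟩, h3⟩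
            rw [hx0, hpb] at h2
            have hq : (y 0 + y (Fin.last (k+1))) / Real.sqrt 2 < 0 := by linarith
            have hq2 : y 0 + y (Fin.last (k+1)) < 0 := by
              have := (div_lt_iff₀ sqrt2_pos).mp hq
              rw [zero_mul] at this
              exact this
            have hc2 : y (Fin.last (k+1)) <
                y 0 + Real.sqrt 2 * hωf (WithLp.toLp 2 (fun i : Fin k => y i.castSucc.succ)) := by
              have h4 := (div_lt_iff₀ sqrt2_pos).mp (htmem.mp h3)
              linarith [mul_comm (hωf (WithLp.toLp 2 (fun i : Fin k => y i.castSucc.succ))) (Real.sqrt 2)]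
            exact (hSmem y).mpr ⟨by linarith, hc2⟩
          · intro hS
            obtain ⟨hc1, hc2⟩ := (hSmem y).mp hS
            have hq : (y 0 + y (Fin.last (k+1))) / Real.sqrt 2 < 0 :=
              div_neg_of_neg_of_pos (by linarith) sqrt2_pos
            refine ⟨⟨?_, ?_⟩, htmem.mpr ?_⟩
            · rw [hx0, hpb]
              linarith
            · rw [hx0, hpb]
              linarith
            · rw [div_lt_iff₀ sqrt2_pos]
              linarith [mul_comm (hωf (WithLp.toLp 2 (fun i : Fin k => y i.castSucc.succ))) (Real.sqrt 2), hc2]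

      · -- lateral boundary
        have haa : a < p 0 := lt_of_le_of_ne hIcc.1 (Ne.symm hpa)
        have hbb : p 0 < b := lt_of_le_of_ne hIcc.2 hpb
        obtain ⟨hm', ρ, Φω, hωf, K, hρ, hΦω0, hKω, hω0, heqω⟩ := hω_lip (tailE p) hfω
        have hdec : ∀ t, Φω t = Φω.linearIsometryEquiv t + tailE p := by
          intro t
          have h1 := Φω.map_vadd 0 t
          simpa [vadd_eq_add, hΦω0] using h1
        set L : Euc (k+1+1) ≃ₗᵢ[ℝ] Euc (k+1+1) :=
          liftLI 1 (by norm_num) Φω.linearIsometryEquiv with hLdef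
        refine ⟨Nat.succ_pos _, min ρ (min (p 0 - a) (b - p 0)), affOf L p,
          (fun z => hωf (tailE z)), K,
          lt_min hρ (lt_min (by linarith) (by linarith)), affOf_zero _ _, ?_, ?_, ?_⟩
        · rw [lipschitzWith_iff_dist_le_mul]
          intro z z'
          calc dist (hωf (tailE z)) (hωf (tailE z')) ≤ K * dist (tailE z) (tailE z') :=
              hKω.dist_le_mul _ _
            _ ≤ K * dist z z' := mul_le_mul_of_nonneg_left (dist_tailE_le z z') K.coe_nonneg
        · show hωf (tailE 0) = 0
          rw [tailE_zero, hω0]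
        · have hcoe2 : ⇑(affOf L p) = fun y => p + L y := funext fun y => affOf_apply _ _ _
          rw [hcoe2]
          apply setEq
          intro y hy
          have hn' := ball_norm _ p _ y hy
          have hnρ : ‖y‖ < ρ := hn'.trans_le (min_le_left _ _)
          have hn1 : ‖y‖ < p 0 - a := hn'.trans_le ((min_le_right _ _).trans (min_le_left _ _))
          have hn2 : ‖y‖ < b - p 0 := hn'.trans_le ((min_le_right _ _).trans (min_le_right _ _))
          have hy0 := abs_coord_le_norm y 0
          have hx0 : (p + L y) 0 = p 0 + y 0 := by
            rw [Euc.add_apply, hLdef, liftLI_apply_zero, one_mul]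
          have hxt : tailE (p + L y) = Φω (tailE y) := by
            rw [tailE_add, hLdef, tailE_liftLI, hdec]
            exact add_comm _ _
          have hball2 : tailE (p + L y) ∈ Metric.ball (tailE p) ρ := by
            rw [Metric.mem_ball, tailE_add, dist_eq_norm, add_sub_cancel_left, hLdef,
              tailE_liftLI, LinearIsometryEquiv.norm_map]
            exact lt_of_le_of_lt (norm_tailE_le y) hnρ
          have htmem : tailE (p + L y) ∈ ω ↔
              tailE y (Fin.last k) < hωf (WithLp.toLp 2 (fun i : Fin k => tailE y i.castSucc)) := by
            rw [interEq_mem heqω hball2, hxt, Function.Injective.mem_set_image Φω.injective]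
            exact Iff.rfl
          constructor
          · rintro ⟨-, h2⟩
            exact htmem.mp h2
          · intro hS
            have hlt1 : |y 0| < p 0 - a := lt_of_le_of_lt hy0 hn1
            have hlt2 : |y 0| < b - p 0 := lt_of_le_of_lt hy0 hn2
            have ha1 := neg_lt_of_abs_lt hlt1
            have ha2 := lt_of_abs_lt hlt2
            refine ⟨⟨?_, ?_⟩, htmem.mpr hS⟩
            · rw [hx0]
              linarith
            · rw [hx0]
              linarith

  · -- top/bottom face
    have hpω : tailE p ∈ ω := by
      rw [closure_eq_interior_union_frontier] at hclω
      rcases hclω with h | h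
      · rwa [hω_open.interior_eq] at h
      · exact absurd h hfω
    have hpab : p 0 = a ∨ p 0 = b := by
      rcases hdisj with h | h
      · exact h
      · exact absurd h hfω
    obtain ⟨ρ, hρ, hballω⟩ := Metric.isOpen_iff.mp hω_open _ hpω
    rcases hpab with hpa | hpb
    · -- face x₀ = a
      set L : Euc (k+1+1) ≃ₗᵢ[ℝ] Euc (k+1+1) :=
        (rotLI k).trans (liftLI (-1) (by norm_num) (LinearIsometryEquiv.refl ℝ (Euc (k+1)))) with hLdef
      have hSface : ∀ y : Euc (k+1+1),
          (y (Fin.last (k+1)) < -(y ((0 : Fin (k+1)).castSucc))) ↔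
            y (Fin.last (k+1)) < -(y 0) := fun y => by rw [Fin.castSucc_zero]
      refine ⟨Nat.succ_pos _, min ρ ((b - a)/2), affOf L p,
        (fun z => -(z 0)), 1, lt_min hρ (by linarith), affOf_zero _ _, ?_, ?_, ?_⟩
      · rw [lipschitzWith_iff_dist_le_mul]
        intro z z'
        have h2 : |(-(z 0)) - (-(z' 0))| = |z 0 - z' 0| := by rw [neg_sub_neg, abs_sub_comm]
        rw [Real.dist_eq, h2]
        simpa [one_mul] using abs_coord_sub_le z z' 0
      · show -((0 : Euc (k+1)) 0) = 0
        rw [show ((0 : Euc (k+1)) 0 : ℝ) = 0 from rfl, neg_zero]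
      · have hcoe2 : ⇑(affOf L p) = fun y => p + L y := funext fun y => affOf_apply _ _ _
        rw [hcoe2]
        apply setEq
        intro y hy
        have hn' := ball_norm _ p _ y hy
        have hnρ : ‖y‖ < ρ := hn'.trans_le (min_le_left _ _)
        have hnab : ‖y‖ < (b - a)/2 := hn'.trans_le (min_le_right _ _)
        have hy0 := abs_coord_le_norm y 0
        have hyL := abs_coord_le_norm y (Fin.last (k+1))
        have hx0 : (p + L y) 0 = p 0 + (-1) * ((y 0 + y (Fin.last (k+1))) / Real.sqrt 2) := by
          rw [Euc.add_apply, hLdef, LinearIsometryEquiv.trans_apply, liftLI_apply_zero,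
            rotLI_apply_zero]
        have hxt : tailE (p + L y) ∈ ω := by
          apply hballω
          rw [Metric.mem_ball, tailE_add, dist_eq_norm, add_sub_cancel_left]
          exact lt_of_le_of_lt (norm_tailE_le _) (by rw [L.norm_map]; exact hnρ)
        have habs : |(y 0 + y (Fin.last (k+1))) / Real.sqrt 2| < b - a := by
          rw [abs_div, abs_of_pos sqrt2_pos]
          calc |y 0 + y (Fin.last (k+1))| / Real.sqrt 2 ≤ |y 0 + y (Fin.last (k+1))| :=
              div_le_self (abs_nonneg _) one_le_sqrt2
            _ ≤ |y 0| + |y (Fin.last (k+1))| := abs_add_le _ _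
            _ < b - a := by linarith
        have hD := abs_lt.mp habs
        constructor
        · rintro ⟨⟨h1, h2⟩, -⟩
          rw [hx0, hpa] at h1
          have hq : (y 0 + y (Fin.last (k+1))) / Real.sqrt 2 < 0 := by linarith
          have hq2 : y 0 + y (Fin.last (k+1)) < 0 := by
            have := (div_lt_iff₀ sqrt2_pos).mp hq
            rw [zero_mul] at this
            exact this
          exact (hSface y).mpr (by linarith)
        · intro hS
          have hc1 : y (Fin.last (k+1)) < -(y 0) := (hSface y).mp hS
          have hq : (y 0 + y (Fin.last (k+1))) / Real.sqrt 2 < 0 :=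
            div_neg_of_neg_of_pos (by linarith) sqrt2_pos
          refine ⟨⟨?_, ?_⟩, hxt⟩
          · rw [hx0, hpa]
            linarith
          · rw [hx0, hpa]
            linarith
    · -- face x₀ = b
      set L : Euc (k+1+1) ≃ₗᵢ[ℝ] Euc (k+1+1) :=
        (rotLI k).trans (liftLI 1 (by norm_num) (LinearIsometryEquiv.refl ℝ (Euc (k+1)))) with hLdef
      have hSface : ∀ y : Euc (k+1+1),
          (y (Fin.last (k+1)) < -(y ((0 : Fin (k+1)).castSucc))) ↔
            y (Fin.last (k+1)) < -(y 0) := fun y => by rw [Fin.castSucc_zero]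
      refine ⟨Nat.succ_pos _, min ρ ((b - a)/2), affOf L p,
        (fun z => -(z 0)), 1, lt_min hρ (by linarith), affOf_zero _ _, ?_, ?_, ?_⟩
      · rw [lipschitzWith_iff_dist_le_mul]
        intro z z'
        have h2 : |(-(z 0)) - (-(z' 0))| = |z 0 - z' 0| := by rw [neg_sub_neg, abs_sub_comm]
        rw [Real.dist_eq, h2]
        simpa [one_mul] using abs_coord_sub_le z z' 0
      · show -((0 : Euc (k+1)) 0) = 0
        rw [show ((0 : Euc (k+1)) 0 : ℝ) = 0 from rfl, neg_zero]
      · have hcoe2 : ⇑(affOf L p) = fun y => p + L y := funext fun y => affOf_apply _ _ _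
        rw [hcoe2]
        apply setEq
        intro y hy
        have hn' := ball_norm _ p _ y hy
        have hnρ : ‖y‖ < ρ := hn'.trans_le (min_le_left _ _)
        have hnab : ‖y‖ < (b - a)/2 := hn'.trans_le (min_le_right _ _)
        have hy0 := abs_coord_le_norm y 0
        have hyL := abs_coord_le_norm y (Fin.last (k+1))
        have hx0 : (p + L y) 0 = p 0 + 1 * ((y 0 + y (Fin.last (k+1))) / Real.sqrt 2) := by
          rw [Euc.add_apply, hLdef, LinearIsometryEquiv.trans_apply, liftLI_apply_zero,
            rotLI_apply_zero]
        have hxt : tailE (p + L y) ∈ ω := by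
          apply hballω
          rw [Metric.mem_ball, tailE_add, dist_eq_norm, add_sub_cancel_left]
          exact lt_of_le_of_lt (norm_tailE_le _) (by rw [L.norm_map]; exact hnρ)
        have habs : |(y 0 + y (Fin.last (k+1))) / Real.sqrt 2| < b - a := by
          rw [abs_div, abs_of_pos sqrt2_pos]
          calc |y 0 + y (Fin.last (k+1))| / Real.sqrt 2 ≤ |y 0 + y (Fin.last (k+1))| :=
              div_le_self (abs_nonneg _) one_le_sqrt2
            _ ≤ |y 0| + |y (Fin.last (k+1))| := abs_add_le _ _
            _ < b - a := by linarith
        have hD := abs_lt.mp habs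
        constructor
        · rintro ⟨⟨h1, h2⟩, -⟩
          rw [hx0, hpb] at h2
          have hq : (y 0 + y (Fin.last (k+1))) / Real.sqrt 2 < 0 := by linarith
          have hq2 : y 0 + y (Fin.last (k+1)) < 0 := by
            have := (div_lt_iff₀ sqrt2_pos).mp hq
            rw [zero_mul] at this
            exact this
          exact (hSface y).mpr (by linarith)
        · intro hS
          have hc1 : y (Fin.last (k+1)) < -(y 0) := (hSface y).mp hS
          have hq : (y 0 + y (Fin.last (k+1))) / Real.sqrt 2 < 0 :=
            div_neg_of_neg_of_pos (by linarith) sqrt2_pos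
          refine ⟨⟨?_, ?_⟩, hxt⟩
          · rw [hx0, hpb]
            linarith
          · rw [hx0, hpb]
            linarith
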